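/- If each of n vertices connects to exactly k ≥ 2 other uniformly random vertices (the Ulam random graph), then the probability that the resulting undirected graph is disconnected is at most C_k · n^{−(k−1)(k+1)} for n large, where C_k depends only on k. -/

import Mathlib

open Finset

/-- Sample space: each vertex `v` picks a `k`-subset of the other `n-1` vertices. -/
def PickSpace (n k : ℕ) : Type :=
  ∀ v : Fin n, {s : Finset (Fin n) // s.card = k ∧ v ∉ s}

/-- The (undirected) Ulam random graph: `u ~ v` iff `u` picked `v` or `v` picked `u`. -/
def ulamGraph (n k : ℕ) (ω : PickSpace n k) : SimpleGraph (Fin n) :=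
  SimpleGraph.fromRel (fun u v => u ∈ (ω v).1 ∨ v ∈ (ω u).1)

instance US17_fintype (n k : ℕ) : Fintype (PickSpace n k) :=
  inferInstanceAs (Fintype (∀ v : Fin n, {s : Finset (Fin n) // s.card = k ∧ v ∉ s}))

lemma US17_card_pick (n k : ℕ) (v : Fin n) :
    Fintype.card {s : Finset (Fin n) // s.card = k ∧ v ∉ s} = (n - 1).choose k := by
  classical
  have hfil : (univ.filter fun s : Finset (Fin n) => s.card = k ∧ v ∉ s)
      = Finset.powersetCard k ((univ : Finset (Fin n)).erase v) := by
    ext s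
    simp only [mem_filter, mem_univ, true_and, Finset.mem_powersetCard, Finset.subset_erase,
      Finset.subset_univ, true_and]
    tauto
  rw [Fintype.card_subtype, hfil, Finset.card_powersetCard,
    Finset.card_erase_of_mem (mem_univ v), card_univ, Fintype.card_fin]

lemma US17_card_pick_sub (n k : ℕ) (T : Finset (Fin n)) (v : Fin n) :
    Fintype.card {s : Finset (Fin n) // s.card = k ∧ v ∉ s ∧ s ⊆ T}
      = ((T.erase v).card).choose k := by
  classical
  have hfil : (univ.filter fun s : Finset (Fin n) => s.card = k ∧ v ∉ s ∧ s ⊆ T)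
      = Finset.powersetCard k (T.erase v) := by
    ext s
    simp only [mem_filter, mem_univ, true_and, Finset.mem_powersetCard, Finset.subset_erase]
    tauto
  rw [Fintype.card_subtype, hfil, Finset.card_powersetCard]

lemma US17_card_pickspace (n k : ℕ) :
    Nat.card (PickSpace n k) = ((n - 1).choose k) ^ n := by
  show Nat.card (∀ v : Fin n, {s : Finset (Fin n) // s.card = k ∧ v ∉ s}) = _
  rw [Nat.card_pi]
  simp only [Nat.card_eq_fintype_card, US17_card_pick]
  rw [Finset.prod_const, card_univ, Fintype.card_fin]

def US17_Iso {n : ℕ} (k : ℕ) (S : Finset (Fin n)) (ω : PickSpace n k) : Prop :=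
  ∀ v w : Fin n, w ∈ (ω v).1 → (v ∈ S ↔ w ∈ S)

lemma US17_card_iso_le (n k : ℕ) (S : Finset (Fin n)) :
    Nat.card {ω : PickSpace n k // US17_Iso k S ω}
      ≤ ((S.card - 1).choose k) ^ S.card * ((n - S.card - 1).choose k) ^ (n - S.card) := by
  classical
  set T : Fin n → Finset (Fin n) := fun v => if v ∈ S then S else Sᶜ with hT
  have hsub : ∀ (ω : {ω : PickSpace n k // US17_Iso k S ω}) (v : Fin n), (ω.1 v).1 ⊆ T v := by
    intro ω v w hw
    by_cases hv : v ∈ S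
    · simp only [hT, if_pos hv]
      exact (ω.2 v w hw).mp hv
    · simp only [hT, if_neg hv, Finset.mem_compl]
      exact fun hwS => hv ((ω.2 v w hw).mpr hwS)
  have hinj : Function.Injective (fun (ω : {ω : PickSpace n k // US17_Iso k S ω}) =>
      (fun v => (⟨(ω.1 v).1, (ω.1 v).2.1, (ω.1 v).2.2, hsub ω v⟩ :
        {s : Finset (Fin n) // s.card = k ∧ v ∉ s ∧ s ⊆ T v}))) := by
    intro ω ω' h
    apply Subtype.ext
    funext v
    have hv2 := congrFun h v
    simp only [Subtype.mk.injEq] at hv2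
    exact Subtype.ext hv2
  calc Nat.card {ω : PickSpace n k // US17_Iso k S ω}
      ≤ Nat.card (∀ v : Fin n, {s : Finset (Fin n) // s.card = k ∧ v ∉ s ∧ s ⊆ T v}) :=
        Nat.card_le_card_of_injective _ hinj
    _ = ∏ v : Fin n, ((T v).erase v).card.choose k := by
        rw [Nat.card_pi]
        exact Finset.prod_congr rfl fun v _ => by
          rw [Nat.card_eq_fintype_card, US17_card_pick_sub]
    _ = _ := by
        rw [← Finset.prod_mul_prod_compl S]
        congr 1
        · calc ∏ v ∈ S, ((T v).erase v).card.choose k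
              = ∏ _v ∈ S, (S.card - 1).choose k :=
                Finset.prod_congr rfl fun v hv => by
                  simp only [hT, if_pos hv, Finset.card_erase_of_mem hv]
            _ = _ := by rw [Finset.prod_const]
        · calc ∏ v ∈ Sᶜ, ((T v).erase v).card.choose k
              = ∏ _v ∈ Sᶜ, (n - S.card - 1).choose k :=
                Finset.prod_congr rfl fun v hv => by
                  rw [Finset.mem_compl] at hv
                  simp only [hT, if_neg hv,
                    Finset.card_erase_of_mem (Finset.mem_compl.mpr hv),
                    Finset.card_compl, Fintype.card_fin]
            _ = _ := by rw [Finset.prod_const, Finset.card_compl, Fintype.card_fin]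

lemma US17_count (n k : ℕ) (hn : 0 < n) :
    Nat.card {ω : PickSpace n k // ¬ (ulamGraph n k ω).Connected}
      ≤ ∑ ℓ ∈ Finset.Icc 1 (n - 1),
          n.choose ℓ * (((ℓ - 1).choose k) ^ ℓ * ((n - ℓ - 1).choose k) ^ (n - ℓ)) := by
  classical
  haveI hNE : Nonempty (Fin n) := ⟨⟨0, hn⟩⟩
  rw [Nat.card_eq_fintype_card, Fintype.card_subtype]
  set 𝒮 : Finset (Finset (Fin n)) := univ.filter (fun S => S.Nonempty ∧ S ≠ univ) with h𝒮
  have step1 : (univ.filter fun ω : PickSpace n k => ¬ (ulamGraph n k ω).Connected)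
      ⊆ 𝒮.biUnion (fun S => univ.filter fun ω : PickSpace n k => US17_Iso k S ω) := by
    intro ω hω
    simp only [mem_filter, mem_univ, true_and] at hω
    have hpre : ¬ (ulamGraph n k ω).Preconnected := fun hp => hω ⟨hp⟩
    rw [SimpleGraph.Preconnected] at hpre
    push_neg at hpre
    obtain ⟨u, v, huv⟩ := hpre
    set S := univ.filter (fun w => (ulamGraph n k ω).Reachable u w) with hS
    have hIso : US17_Iso k S ω := by
      intro a w hw
      have hne : a ≠ w := by rintro rfl; exact (ω a).2.2 hw
      have hAdj : (ulamGraph n k ω).Adj a w := by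
        simp only [ulamGraph, SimpleGraph.fromRel_adj]
        exact ⟨hne, Or.inl (Or.inr hw)⟩
      simp only [hS, mem_filter, mem_univ, true_and]
      exact ⟨fun h => h.trans hAdj.reachable, fun h => h.trans hAdj.symm.reachable⟩
    simp only [mem_biUnion, mem_filter, mem_univ, true_and, h𝒮]
    refine ⟨S, ⟨⟨u, ?_⟩, ?_⟩, hIso⟩
    · simp only [hS, mem_filter, mem_univ, true_and]
      exact SimpleGraph.Reachable.refl u
    intro hEq
    exact huv (by simpa [hS] using (hEq ▸ mem_univ v : v ∈ S))
  calc (univ.filter fun ω : PickSpace n k => ¬ (ulamGraph n k ω).Connected).card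
      ≤ (𝒮.biUnion fun S => univ.filter fun ω : PickSpace n k => US17_Iso k S ω).card :=
        card_le_card step1
    _ ≤ ∑ S ∈ 𝒮, (univ.filter fun ω : PickSpace n k => US17_Iso k S ω).card := card_biUnion_le
    _ ≤ ∑ S ∈ 𝒮, (((S.card - 1).choose k) ^ S.card * ((n - S.card - 1).choose k) ^ (n - S.card)) := by
        refine sum_le_sum fun S _ => ?_
        have h := US17_card_iso_le n k S
        rwa [Nat.card_eq_fintype_card, Fintype.card_subtype] at h
    _ ≤ ∑ ℓ ∈ Finset.Icc 1 (n - 1), ∑ S ∈ Finset.powersetCard ℓ (univ : Finset (Fin n)),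
          (((S.card - 1).choose k) ^ S.card * ((n - S.card - 1).choose k) ^ (n - S.card)) := by
        rw [← Finset.sum_biUnion]
        · apply Finset.sum_le_sum_of_subset
          intro S hSm
          simp only [h𝒮, mem_filter, mem_univ, true_and] at hSm
          simp only [mem_biUnion, Finset.mem_Icc, Finset.mem_powersetCard]
          refine ⟨S.card, ⟨Finset.card_pos.mpr hSm.1, ?_⟩, Finset.subset_univ S, rfl⟩
          have hlt : S.card < n := by
            have := Finset.card_lt_card (Finset.ssubset_univ_iff.mpr hSm.2)
            simpa [card_univ] using this
          omega
        · intro a ha b hb hab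
          simp only [Function.onFun, Finset.disjoint_left]
          intro S hSa hSb
          rw [Finset.mem_powersetCard] at hSa hSb
          exact hab (hSa.2 ▸ hSb.2)
    _ = ∑ ℓ ∈ Finset.Icc 1 (n - 1),
          n.choose ℓ * (((ℓ - 1).choose k) ^ ℓ * ((n - ℓ - 1).choose k) ^ (n - ℓ)) := by
        refine Finset.sum_congr rfl fun ℓ _ => ?_
        rw [Finset.sum_congr rfl (fun S hS => ?_), Finset.sum_const, Finset.card_powersetCard,
          card_univ, Fintype.card_fin, smul_eq_mul]
        have hc : S.card = ℓ := (Finset.mem_powersetCard.mp hS).2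
        rw [hc]

lemma US17_count2 (n k : ℕ) (hn : 2 * k + 4 ≤ n) :
    ∑ ℓ ∈ Finset.Icc 1 (n - 1),
        n.choose ℓ * (((ℓ - 1).choose k) ^ ℓ * ((n - ℓ - 1).choose k) ^ (n - ℓ))
    = ∑ ℓ ∈ Finset.Icc (k + 1) (n - k - 1),
        n.choose ℓ * (((ℓ - 1).choose k) ^ ℓ * ((n - ℓ - 1).choose k) ^ (n - ℓ)) := by
  symm
  apply Finset.sum_subset
  · intro ℓ hl
    simp only [Finset.mem_Icc] at *
    omega
  · intro ℓ hl hnot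
    simp only [Finset.mem_Icc] at hl hnot
    rcases (by omega : ℓ ≤ k ∨ n - k ≤ ℓ) with h | h
    · have h0 : (ℓ - 1).choose k = 0 := Nat.choose_eq_zero_of_lt (by omega)
      rw [h0, zero_pow (by omega : ℓ ≠ 0), zero_mul, mul_zero]
    · have h0 : (n - ℓ - 1).choose k = 0 := Nat.choose_eq_zero_of_lt (by omega)
      rw [h0, zero_pow (by omega : n - ℓ ≠ 0), mul_zero, mul_zero]

lemma US17_desc (k m n : ℕ) (hm : m ≤ n) :
    (m - 1).descFactorial k * n ^ k ≤ (n - 1).descFactorial k * m ^ k := by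
  calc (m - 1).descFactorial k * n ^ k = ∏ i ∈ Finset.range k, ((m - 1 - i) * n) := by
        rw [Nat.descFactorial_eq_prod_range, Finset.prod_mul_distrib, Finset.prod_const,
          Finset.card_range]
    _ ≤ ∏ i ∈ Finset.range k, ((n - 1 - i) * m) := Finset.prod_le_prod' (fun i _ => ?_)
    _ = (n - 1).descFactorial k * m ^ k := by
        rw [Nat.descFactorial_eq_prod_range, Finset.prod_mul_distrib, Finset.prod_const,
          Finset.card_range]
  have h1 : m - 1 - i = m - (i + 1) := by omega
  have h2 : n - 1 - i = n - (i + 1) := by omega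
  rw [h1, h2, Nat.sub_mul, Nat.sub_mul]
  rw [mul_comm m n]
  exact Nat.sub_le_sub_left (Nat.mul_le_mul_left (i + 1) hm) (n * m)

lemma US17_choose_nat (k m n : ℕ) (hm : m ≤ n) :
    (m - 1).choose k * n ^ k ≤ (n - 1).choose k * m ^ k := by
  have h := US17_desc k m n hm
  rw [Nat.descFactorial_eq_factorial_mul_choose, Nat.descFactorial_eq_factorial_mul_choose,
    mul_assoc, mul_assoc] at h
  exact Nat.le_of_mul_le_mul_left h (Nat.factorial_pos k)

lemma US17_choose_real (k m n : ℕ) (hm : m ≤ n) (hn : 0 < n) :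
    ((m - 1).choose k : ℝ) ≤ ((m : ℝ) / n) ^ k * ((n - 1).choose k) := by
  have h := US17_choose_nat k m n hm
  have hnR : (0 : ℝ) < (n : ℝ) ^ k := by positivity
  rw [div_pow, div_mul_eq_mul_div, le_div_iff₀ hnR, mul_comm ((m:ℝ)^k)]
  exact_mod_cast h

lemma US17_pow_self (l : ℕ) : (l : ℝ) ^ l ≤ Real.exp 1 ^ l * (Nat.factorial l) := by
  induction l with
  | zero => simp
  | succ j ih =>
    have hstep : ((j + 1 : ℕ) : ℝ) ^ j ≤ Real.exp 1 * (j : ℝ) ^ j := by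
      rcases Nat.eq_zero_or_pos j with h0 | hj
      · subst h0
        simpa using (by linarith [Real.add_one_le_exp 1] : (1:ℝ) ≤ Real.exp 1)
      · have hjR : (0 : ℝ) < j := by exact_mod_cast hj
        have h1 : ((j + 1 : ℕ) : ℝ) = (j : ℝ) * (1 + 1 / (j : ℝ)) := by
          field_simp
          exact Nat.cast_succ j
        rw [h1, mul_pow]
        have h2 : (1 + 1 / (j : ℝ)) ^ j ≤ Real.exp 1 := by
          calc (1 + 1 / (j : ℝ)) ^ j ≤ (Real.exp (1 / (j : ℝ))) ^ j := by
                apply pow_le_pow_left₀ (by positivity)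
                have := Real.add_one_le_exp (1 / (j : ℝ))
                linarith
            _ = Real.exp ((j : ℕ) * (1 / (j : ℝ))) := (Real.exp_nat_mul _ j).symm
            _ = Real.exp 1 := by rw [mul_one_div, div_self (ne_of_gt hjR)]
        calc (j : ℝ) ^ j * (1 + 1 / (j : ℝ)) ^ j ≤ (j : ℝ) ^ j * Real.exp 1 := by
              apply mul_le_mul_of_nonneg_left h2 (by positivity)
          _ = Real.exp 1 * (j : ℝ) ^ j := mul_comm _ _
    calc ((j + 1 : ℕ) : ℝ) ^ (j + 1) = ((j + 1 : ℕ) : ℝ) * ((j + 1 : ℕ) : ℝ) ^ j := by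
          rw [pow_succ]; ring
      _ ≤ ((j + 1 : ℕ) : ℝ) * (Real.exp 1 * (j : ℝ) ^ j) := by
          apply mul_le_mul_of_nonneg_left hstep (by positivity)
      _ ≤ ((j + 1 : ℕ) : ℝ) * (Real.exp 1 * (Real.exp 1 ^ j * (Nat.factorial j))) := by
          have he : (0:ℝ) < Real.exp 1 := Real.exp_pos 1
          apply mul_le_mul_of_nonneg_left _ (by positivity)
          exact mul_le_mul_of_nonneg_left ih (le_of_lt he)
      _ = Real.exp 1 ^ (j + 1) * (Nat.factorial (j + 1)) := by
          push_cast [Nat.factorial_succ, pow_succ]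
          ring

lemma US17_one_sub_pow (x : ℝ) (hx0 : 0 ≤ x) (hx1 : x ≤ 1) (m : ℕ) :
    (1 - x) ^ m ≤ Real.exp (-((m : ℝ) * x)) := by
  calc (1 - x) ^ m ≤ (Real.exp (-x)) ^ m := by
        apply pow_le_pow_left₀ (by linarith)
        have := Real.add_one_le_exp (-x)
        linarith
    _ = Real.exp ((m : ℝ) * (-x)) := (Real.exp_nat_mul _ _).symm
    _ = Real.exp (-((m : ℝ) * x)) := by ring_nf

noncomputable def US17_u (n k l : ℕ) : ℝ :=
  (n.choose l : ℝ) * ((l : ℝ) / (n : ℝ)) ^ (k * l) * (((n - l : ℕ) : ℝ) / (n : ℝ)) ^ (k * (n - l))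

lemma US17_u_nonneg (n k l : ℕ) : 0 ≤ US17_u n k l := by
  unfold US17_u; positivity

lemma US17_u_symm (n k l : ℕ) (h : l ≤ n) : US17_u n k (n - l) = US17_u n k l := by
  unfold US17_u
  rw [Nat.sub_sub_self h, Nat.choose_symm h]
  ring

lemma US17_u_le (n k l : ℕ) (hk : 2 ≤ k) (hl : k + 1 ≤ l) (hn : 2 * l ≤ n) :
    US17_u n k l ≤ (l : ℝ) ^ ((k - 1) * (k + 1)) * (1 / 2 : ℝ) ^ (l - (k + 1))
      / (n : ℝ) ^ ((k - 1) * (k + 1)) := by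
  have hl0 : 0 < l := by omega
  have hn0 : 0 < n := by omega
  have hln : l ≤ n := by omega
  have hL : (0 : ℝ) < l := by exact_mod_cast hl0
  have hN : (0 : ℝ) < n := by exact_mod_cast hn0
  have hLN : (l : ℝ) ≤ n := by exact_mod_cast hln
  have h2LN : 2 * (l : ℝ) ≤ n := by exact_mod_cast hn
  have hsub : ((n - l : ℕ) : ℝ) = (n : ℝ) - l := by
    push_cast [hln]; ring
  have hF : (0 : ℝ) < Nat.factorial l := by exact_mod_cast Nat.factorial_pos l
  have hA : (n.choose l : ℝ) ≤ (n : ℝ) ^ l / (Nat.factorial l) := by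
    rw [le_div_iff₀ hF]
    have h1 : n.choose l * Nat.factorial l ≤ n ^ l := by
      rw [mul_comm, ← Nat.descFactorial_eq_factorial_mul_choose]
      exact Nat.descFactorial_le_pow n l
    exact_mod_cast h1
  have hC : (((n - l : ℕ) : ℝ) / n) ^ (k * (n - l)) ≤ Real.exp (-1) ^ l := by
    have hx0 : (0 : ℝ) ≤ (l : ℝ) / n := by positivity
    have hx1 : (l : ℝ) / n ≤ 1 := by rw [div_le_one hN]; exact hLN
    have h1 : ((n - l : ℕ) : ℝ) / n = 1 - (l : ℝ) / n := by
      rw [hsub]; field_simp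
    calc (((n - l : ℕ) : ℝ) / n) ^ (k * (n - l))
        = (1 - (l : ℝ) / n) ^ (k * (n - l)) := by rw [h1]
      _ ≤ Real.exp (-((( k * (n - l) : ℕ) : ℝ) * ((l : ℝ) / n))) := US17_one_sub_pow _ hx0 hx1 _
      _ ≤ Real.exp (-(l : ℝ)) := by
          apply Real.exp_le_exp.mpr
          rw [neg_le_neg_iff]
          have hcast : (((k * (n - l) : ℕ)) : ℝ) = (k : ℝ) * ((n : ℝ) - l) := by
            push_cast [hln]; ring
          rw [hcast]
          have hk2 : (2 : ℝ) ≤ k := by exact_mod_cast hk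
          have hnl : (n : ℝ) / 2 ≤ (n : ℝ) - l := by linarith
          calc (l : ℝ) = 2 * ((n : ℝ) / 2) * ((l : ℝ) / n) := by field_simp
            _ ≤ (k : ℝ) * ((n : ℝ) - l) * ((l : ℝ) / n) := by
                apply mul_le_mul_of_nonneg_right _ hx0
                apply mul_le_mul hk2 hnl (by positivity) (by linarith)
      _ = Real.exp (-1) ^ l := by
          rw [← Real.exp_nat_mul]
          congr 1
          ring
  have hinner : (n : ℝ) * ((l : ℝ) / n) ^ k * Real.exp (-1)
      = ((l : ℝ) * Real.exp (-1)) * ((l : ℝ) / n) ^ (k - 1) := by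
    have hsp : ((l : ℝ) / n) ^ k = ((l : ℝ) / n) ^ (k - 1) * ((l : ℝ) / n) := by
      rw [← pow_succ, Nat.sub_add_cancel (by omega : 1 ≤ k)]
    rw [hsp]
    field_simp
  have key1 : US17_u n k l ≤ (1 / (Nat.factorial l : ℝ))
      * (((l : ℝ) * Real.exp (-1)) ^ l * (((l : ℝ) / n) ^ (k - 1)) ^ l) := by
    have step : US17_u n k l ≤ ((n : ℝ) ^ l / (Nat.factorial l)) * ((l : ℝ) / n) ^ (k * l)
        * Real.exp (-1) ^ l := by
      unfold US17_u
      have e1 : (0:ℝ) ≤ ((l : ℝ) / n) ^ (k * l) := by positivity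
      have e2 : (0:ℝ) ≤ (n.choose l : ℝ) := by positivity
      apply mul_le_mul (mul_le_mul hA le_rfl e1 (by positivity)) hC (by positivity) (by positivity)
    calc US17_u n k l ≤ _ := step
      _ = (1 / (Nat.factorial l : ℝ)) * ((n : ℝ) * ((l : ℝ) / n) ^ k * Real.exp (-1)) ^ l := by
          rw [mul_pow, mul_pow, ← pow_mul]
          ring
      _ = _ := by rw [hinner, mul_pow]
  have key2 : ((l : ℝ) * Real.exp (-1)) ^ l ≤ (Nat.factorial l : ℝ) := by
    have hps := US17_pow_self l
    have hE : (0 : ℝ) < Real.exp 1 ^ l := by positivity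
    rw [mul_pow, Real.exp_neg, inv_pow]
    rw [mul_inv_le_iff₀ hE]
    exact hps.trans_eq (mul_comm _ _)
  have key3 : US17_u n k l ≤ (((l : ℝ) / n) ^ (k - 1)) ^ l := by
    calc US17_u n k l ≤ _ := key1
      _ ≤ (1 / (Nat.factorial l : ℝ)) * ((Nat.factorial l : ℝ) * (((l : ℝ) / n) ^ (k - 1)) ^ l) := by
          apply mul_le_mul_of_nonneg_left _ (by positivity)
          apply mul_le_mul_of_nonneg_right key2 (by positivity)
      _ = (((l : ℝ) / n) ^ (k - 1)) ^ l := by field_simp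
  have hsplit : (k - 1) * l = (k - 1) * (k + 1) + (k - 1) * (l - (k + 1)) := by
    rw [← Nat.mul_add, Nat.add_sub_cancel' hl]
  have h12 : (l : ℝ) / n ≤ 1 / 2 := by
    rw [div_le_div_iff₀ hN (by norm_num : (0:ℝ) < 2)]
    linarith
  calc US17_u n k l ≤ (((l : ℝ) / n) ^ (k - 1)) ^ l := key3
    _ = ((l : ℝ) / n) ^ ((k - 1) * (k + 1)) * (((l : ℝ) / n) ^ (k - 1)) ^ (l - (k + 1)) := by
        rw [← pow_mul, ← pow_mul, ← pow_add, ← hsplit]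
    _ ≤ ((l : ℝ) / n) ^ ((k - 1) * (k + 1)) * (1 / 2 : ℝ) ^ (l - (k + 1)) := by
        apply mul_le_mul_of_nonneg_left _ (by positivity)
        apply pow_le_pow_left₀ (by positivity)
        calc ((l : ℝ) / n) ^ (k - 1) ≤ ((l : ℝ) / n) ^ 1 := by
              apply pow_le_pow_of_le_one (by positivity) (by linarith) (by omega : 1 ≤ k - 1)
          _ = (l : ℝ) / n := pow_one _
          _ ≤ 1 / 2 := h12
    _ = (l : ℝ) ^ ((k - 1) * (k + 1)) * (1 / 2 : ℝ) ^ (l - (k + 1))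
          / (n : ℝ) ^ ((k - 1) * (k + 1)) := by
        rw [div_pow]; ring

lemma US17_sum_symm (n k : ℕ) :
    ∑ l ∈ Finset.Icc (k + 1) (n - k - 1), US17_u n k l
      ≤ 2 * ∑ l ∈ Finset.Icc (k + 1) (n / 2), US17_u n k l := by
  have hnn : ∀ l ∈ Finset.Icc (k + 1) (n / 2), 0 ≤ US17_u n k l :=
    fun l _ => US17_u_nonneg n k l
  rw [two_mul]
  calc ∑ l ∈ Finset.Icc (k + 1) (n - k - 1), US17_u n k l
      = ∑ l ∈ (Finset.Icc (k + 1) (n - k - 1)).filter (fun l => 2 * l ≤ n), US17_u n k l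
        + ∑ l ∈ (Finset.Icc (k + 1) (n - k - 1)).filter (fun l => ¬ 2 * l ≤ n), US17_u n k l :=
        (Finset.sum_filter_add_sum_filter_not _ _ _).symm
    _ ≤ (∑ l ∈ Finset.Icc (k + 1) (n / 2), US17_u n k l)
        + ∑ l ∈ Finset.Icc (k + 1) (n / 2), US17_u n k l := by
        apply add_le_add
        · apply Finset.sum_le_sum_of_subset_of_nonneg _ (fun l hl _ => US17_u_nonneg n k l)
          intro l hl
          simp only [Finset.mem_filter, Finset.mem_Icc] at hl ⊢
          omega
        · have hcong : ∀ l ∈ (Finset.Icc (k + 1) (n - k - 1)).filter (fun l => ¬ 2 * l ≤ n),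
              US17_u n k l = US17_u n k (n - l) := by
            intro l hl
            simp only [Finset.mem_filter, Finset.mem_Icc] at hl
            exact (US17_u_symm n k l (by omega)).symm
          rw [Finset.sum_congr rfl hcong]
          have hinj : ∀ a ∈ (Finset.Icc (k + 1) (n - k - 1)).filter (fun l => ¬ 2 * l ≤ n),
              ∀ b ∈ (Finset.Icc (k + 1) (n - k - 1)).filter (fun l => ¬ 2 * l ≤ n),
              n - a = n - b → a = b := by
            intro a ha b hb hab
            simp only [Finset.mem_filter, Finset.mem_Icc] at ha hb
            omega
          have himg : ∑ y ∈ ((Finset.Icc (k + 1) (n - k - 1)).filter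
                (fun l => ¬ 2 * l ≤ n)).image (fun l => n - l), US17_u n k y
              = ∑ x ∈ (Finset.Icc (k + 1) (n - k - 1)).filter (fun l => ¬ 2 * l ≤ n),
                US17_u n k (n - x) := Finset.sum_image hinj
          rw [← himg]
          apply Finset.sum_le_sum_of_subset_of_nonneg _ (fun l hl _ => US17_u_nonneg n k l)
          intro y hy
          simp only [Finset.mem_image, Finset.mem_filter, Finset.mem_Icc] at hy
          obtain ⟨l, ⟨⟨h1, h2⟩, h3⟩, rfl⟩ := hy
          simp only [Finset.mem_Icc]
          omega

lemma US17_halfsum (n k : ℕ) (hk : 2 ≤ k) (hn0 : 0 < n) :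
    ∑ l ∈ Finset.Icc (k + 1) (n / 2), US17_u n k l
      ≤ 2 ^ (k + 1) * (∑' l : ℕ, (l : ℝ) ^ ((k - 1) * (k + 1)) * (1 / 2 : ℝ) ^ l)
        / (n : ℝ) ^ ((k - 1) * (k + 1)) := by
  have hsummable : Summable (fun l : ℕ => (l : ℝ) ^ ((k - 1) * (k + 1)) * (1 / 2 : ℝ) ^ l) := by
    apply summable_pow_mul_geometric_of_norm_lt_one
    rw [Real.norm_eq_abs, abs_of_nonneg (by norm_num : (0:ℝ) ≤ 1/2)]
    norm_num
  have hN : (0 : ℝ) < (n : ℝ) ^ ((k - 1) * (k + 1)) := by positivity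
  calc ∑ l ∈ Finset.Icc (k + 1) (n / 2), US17_u n k l
      ≤ ∑ l ∈ Finset.Icc (k + 1) (n / 2),
          (l : ℝ) ^ ((k - 1) * (k + 1)) * (1 / 2 : ℝ) ^ (l - (k + 1))
            / (n : ℝ) ^ ((k - 1) * (k + 1)) := by
        apply Finset.sum_le_sum
        intro l hl
        simp only [Finset.mem_Icc] at hl
        exact US17_u_le n k l hk hl.1 (by omega)
    _ = (∑ l ∈ Finset.Icc (k + 1) (n / 2),
          (l : ℝ) ^ ((k - 1) * (k + 1)) * (1 / 2 : ℝ) ^ (l - (k + 1)))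
            / (n : ℝ) ^ ((k - 1) * (k + 1)) := by rw [Finset.sum_div]
    _ ≤ (2 ^ (k + 1) * ∑' l : ℕ, (l : ℝ) ^ ((k - 1) * (k + 1)) * (1 / 2 : ℝ) ^ l)
            / (n : ℝ) ^ ((k - 1) * (k + 1)) := by
        rw [div_le_div_iff₀ hN hN]
        apply mul_le_mul_of_nonneg_right ?_ (le_of_lt hN)
        have hterm : ∀ l ∈ Finset.Icc (k + 1) (n / 2),
            (l : ℝ) ^ ((k - 1) * (k + 1)) * (1 / 2 : ℝ) ^ (l - (k + 1))
              = 2 ^ (k + 1) * ((l : ℝ) ^ ((k - 1) * (k + 1)) * (1 / 2 : ℝ) ^ l) := by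
          intro l hl
          simp only [Finset.mem_Icc] at hl
          have hsplit : (1 / 2 : ℝ) ^ l = (1 / 2 : ℝ) ^ (l - (k + 1)) * (1 / 2 : ℝ) ^ (k + 1) := by
            rw [← pow_add, Nat.sub_add_cancel hl.1]
          rw [hsplit]
          have h2 : ((2 : ℝ) ^ (k + 1)) * (1 / 2 : ℝ) ^ (k + 1) = 1 := by
            rw [← mul_pow]
            norm_num
          linear_combination (-((l : ℝ) ^ ((k - 1) * (k + 1)) * (1 / 2 : ℝ) ^ (l - (k + 1)))) * h2
        rw [Finset.sum_congr rfl hterm, ← Finset.mul_sum]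
        apply mul_le_mul_of_nonneg_left _ (by positivity)
        exact Summable.sum_le_tsum _ (fun l _ => by positivity) hsummable

lemma US17_term_le (n k l : ℕ) (hn : 0 < n) (hl2 : l ≤ n) :
    (n.choose l : ℝ) * (((l - 1).choose k : ℝ) ^ l * (((n - l - 1).choose k : ℝ)) ^ (n - l))
      ≤ US17_u n k l * ((n - 1).choose k : ℝ) ^ n := by
  have h1 : ((l - 1).choose k : ℝ) ≤ ((l : ℝ) / n) ^ k * ((n - 1).choose k) :=
    US17_choose_real k l n hl2 hn
  have h2 : ((n - l - 1).choose k : ℝ)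
      ≤ (((n - l : ℕ) : ℝ) / n) ^ k * ((n - 1).choose k) :=
    US17_choose_real k (n - l) n (Nat.sub_le n l) hn
  have hQ : (0 : ℝ) ≤ ((n - 1).choose k : ℝ) := by positivity
  calc (n.choose l : ℝ) * (((l - 1).choose k : ℝ) ^ l * (((n - l - 1).choose k : ℝ)) ^ (n - l))
      ≤ (n.choose l : ℝ) * ((((l : ℝ) / n) ^ k * ((n - 1).choose k)) ^ l
          * (((((n - l : ℕ) : ℝ) / n) ^ k * ((n - 1).choose k)) ^ (n - l))) := by
        apply mul_le_mul_of_nonneg_left _ (by positivity)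
        apply mul_le_mul (pow_le_pow_left₀ (by positivity) h1 l)
          (pow_le_pow_left₀ (by positivity) h2 (n - l)) (by positivity) (by positivity)
    _ = US17_u n k l * ((n - 1).choose k : ℝ) ^ n := by
        unfold US17_u
        rw [mul_pow, mul_pow, ← pow_mul, ← pow_mul]
        rw [← show ((n - 1).choose k : ℝ) ^ l * ((n - 1).choose k : ℝ) ^ (n - l)
              = ((n - 1).choose k : ℝ) ^ n by
            rw [← pow_add, Nat.add_sub_cancel' hl2]]
        ring

theorem stmt_17 (k : ℕ) (hk : 2 ≤ k) :
    ∃ C : ℝ, 0 < C ∧ ∃ N : ℕ, ∀ n : ℕ, N ≤ n →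
      (Nat.card {ω : PickSpace n k // ¬ (ulamGraph n k ω).Connected} : ℝ)
        ≤ C / (n : ℝ) ^ ((k - 1) * (k + 1)) * Nat.card (PickSpace n k) := by
  set m := (k - 1) * (k + 1) with hm
  set B := ∑' l : ℕ, (l : ℝ) ^ m * (1 / 2 : ℝ) ^ l with hB
  have hB0 : 0 ≤ B := tsum_nonneg fun l => by positivity
  refine ⟨2 * 2 ^ (k + 1) * (B + 1), by positivity, 2 * k + 4, fun n hn => ?_⟩
  have hn0 : 0 < n := by omega
  have hN : (0 : ℝ) < n := by exact_mod_cast hn0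
  have hNm : (0 : ℝ) < (n : ℝ) ^ m := by positivity
  have hQ : (0 : ℝ) ≤ ((n - 1).choose k : ℝ) ^ n := by positivity
  calc (Nat.card {ω : PickSpace n k // ¬ (ulamGraph n k ω).Connected} : ℝ)
      ≤ ((∑ l ∈ Finset.Icc (k + 1) (n - k - 1),
          n.choose l * (((l - 1).choose k) ^ l * ((n - l - 1).choose k) ^ (n - l)) : ℕ) : ℝ) := by
        have h := (US17_count n k hn0).trans_eq (US17_count2 n k hn)
        exact_mod_cast h
    _ = ∑ l ∈ Finset.Icc (k + 1) (n - k - 1),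
          (n.choose l : ℝ) * (((l - 1).choose k : ℝ) ^ l
            * ((n - l - 1).choose k : ℝ) ^ (n - l)) := by
        push_cast
        rfl
    _ ≤ ∑ l ∈ Finset.Icc (k + 1) (n - k - 1), US17_u n k l * ((n - 1).choose k : ℝ) ^ n := by
        apply Finset.sum_le_sum
        intro l hl
        simp only [Finset.mem_Icc] at hl
        exact US17_term_le n k l hn0 (by omega)
    _ = (∑ l ∈ Finset.Icc (k + 1) (n - k - 1), US17_u n k l) * ((n - 1).choose k : ℝ) ^ n := by
        rw [Finset.sum_mul]
    _ ≤ (2 * ∑ l ∈ Finset.Icc (k + 1) (n / 2), US17_u n k l) * ((n - 1).choose k : ℝ) ^ n := by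
        exact mul_le_mul_of_nonneg_right (US17_sum_symm n k) hQ
    _ ≤ (2 * (2 ^ (k + 1) * B / (n : ℝ) ^ m)) * ((n - 1).choose k : ℝ) ^ n := by
        apply mul_le_mul_of_nonneg_right _ hQ
        exact mul_le_mul_of_nonneg_left (US17_halfsum n k hk hn0) (by norm_num)
    _ ≤ (2 * 2 ^ (k + 1) * (B + 1) / (n : ℝ) ^ m) * ((n - 1).choose k : ℝ) ^ n := by
        apply mul_le_mul_of_nonneg_right _ hQ
        have hrw : 2 * (2 ^ (k + 1) * B / (n : ℝ) ^ m)
            = 2 * 2 ^ (k + 1) * B / (n : ℝ) ^ m := by ring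
        rw [hrw]
        gcongr
        linarith
    _ = 2 * 2 ^ (k + 1) * (B + 1) / (n : ℝ) ^ m * (Nat.card (PickSpace n k) : ℝ) := by
        rw [US17_card_pickspace]
        push_cast
        rfl
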